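/- Let k ≥ 2 and m ≥ 1 be integers and n = km. Let O be an n×m matrix each of whose rows is a permutation of {1,...,m}, and suppose the row indices {1,...,n} can be partitioned into k blocks of size m such that, within each block, every column of O contains each of the symbols 1,...,m exactly once. Then there exists an n×m Latin hypercube design X such that (X,O) is marginally coupled. -/
import Mathlib


/-- `(X, O)` with `n = k·m` rows is marginally coupled if for every column `j` of `O`,
every level `c ∈ {1,…,m}`, and every column `j'` of `X`, the level `c` appears in
column `j` of `O` exactly `k` times and the collapsed values `⌊(X(i,j') - 1)/m⌋` over
those `k` rows are exactly `0, 1, …, k-1`, each occurring once. -/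
def MargCoupled (k m : ℕ) (X O : Fin (k * m) → Fin m → ℕ) : Prop :=
  ∀ j j' : Fin m, ∀ c ∈ Finset.Icc 1 m,
    (Finset.univ.filter fun i => O i j = c).card = k ∧
    (Finset.univ.filter fun i => O i j = c).image (fun i => (X i j' - 1) / m)
      = Finset.range k

/-- let `n = k·m` with `k ≥ 2`, `m ≥ 1`, and let `O` be an `n × m`
matrix each of whose rows is a permutation of `{1,…,m}` whose rows can be partitioned
into `k` blocks of size `m` such that within each block every column of `O` contains
each symbol of `{1,…,m}` exactly once.  Then there exists an `n × m` Latin hypercube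
design `X` such that `(X, O)` is marginally coupled. -/
theorem stmt_15 (k m : ℕ) (hk : 2 ≤ k) (hm : 1 ≤ m)
    (O : Fin (k * m) → Fin m → ℕ)
    (hO : ∀ i : Fin (k * m), Finset.image (fun j => O i j) Finset.univ = Finset.Icc 1 m)
    (hB : ∃ B : Fin (k * m) → Fin k, ∀ t : Fin k,
      (Finset.univ.filter fun i => B i = t).card = m ∧
      ∀ j : Fin m,
        (Finset.univ.filter fun i => B i = t).image (fun i => O i j) = Finset.Icc 1 m) :
    ∃ X : Fin (k * m) → Fin m → ℕ,
      (∀ j : Fin m, Finset.image (fun i => X i j) Finset.univ = Finset.Icc 1 (k * m)) ∧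
      MargCoupled k m X O := by
  obtain ⟨B, hB⟩ := hB
  have hOm : ∀ i j, O i j ∈ Finset.Icc 1 m := by
    intro i j
    rw [← hO i]
    exact Finset.mem_image_of_mem _ (Finset.mem_univ j)
  have hO1 : ∀ i j, 1 ≤ O i j := fun i j => (Finset.mem_Icc.1 (hOm i j)).1
  have hOle : ∀ i j, O i j ≤ m := fun i j => (Finset.mem_Icc.1 (hOm i j)).2
  refine ⟨fun i j => (B i : ℕ) * m + O i j, ?_, ?_⟩
  case _ =>
    -- collapsed value helper
    have hcoll : ∀ i (j : Fin m), ((B i : ℕ) * m + O i j - 1) / m = (B i : ℕ) := by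
      intro i j
      have h1 := hO1 i j
      have h2 := hOle i j
      have he : (B i : ℕ) * m + O i j - 1 = (O i j - 1) + (B i : ℕ) * m := by omega
      rw [he, Nat.add_mul_div_right _ _ (by omega : 0 < m),
        Nat.div_eq_of_lt (by omega)]
      omega
    -- injectivity within block
    have hinjblk : ∀ (j : Fin m) (i i' : Fin (k*m)), B i = B i' → O i j = O i' j → i = i' := by
      intro j i i' hb ho
      have h1 := (hB (B i)).1
      have h2 := (hB (B i)).2 j
      have hcard : ((Finset.univ.filter fun x => B x = B i).image fun x => O x j).card
          = (Finset.univ.filter fun x => B x = B i).card := by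
        rw [h2, h1, Nat.card_Icc]; omega
      have hinj := Finset.injOn_of_card_image_eq hcard
      exact hinj (by simp) (by simp [hb]) ho
    intro j
    have hinj : Function.Injective (fun i => (B i : ℕ) * m + O i j) := by
      intro i i' h
      simp only at h
      have hb : (B i : ℕ) = (B i' : ℕ) := by
        have := hcoll i j
        rw [h, hcoll i' j] at this
        omega
      have ho : O i j = O i' j := by
        have h1 := hO1 i j; have h2 := hOle i j
        have := hb ▸ h
        omega
      exact hinjblk j i i' (Fin.val_injective hb) ho
    apply Finset.eq_of_subset_of_card_le
    · intro x hx
      simp only [Finset.mem_image, Finset.mem_univ, true_and] at hx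
      obtain ⟨i, rfl⟩ := hx
      have h1 := hO1 i j; have h2 := hOle i j
      have hb : (B i : ℕ) < k := (B i).isLt
      rw [Finset.mem_Icc]
      constructor
      · omega
      · have hle : (B i : ℕ) * m ≤ (k - 1) * m := by
          have : (B i : ℕ) ≤ k - 1 := by omega
          exact Nat.mul_le_mul_right m this
        have h3 := Nat.sub_one_mul k m
        have h4 : m ≤ k * m := Nat.le_mul_of_pos_left m (by omega)
        omega
    · rw [Nat.card_Icc, Finset.card_image_of_injective _ hinj]
      simp
  case _ =>
    intro j j' c hc
    -- every block has exactly one row with O i j = c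
    have key : ∀ t : Fin k, ∃! i : Fin (k*m), B i = t ∧ O i j = c := by
      intro t
      have h2 := (hB t).2 j
      have : c ∈ (Finset.univ.filter fun i => B i = t).image (fun i => O i j) := by
        rw [h2]; exact hc
      simp only [Finset.mem_image, Finset.mem_filter, Finset.mem_univ, true_and] at this
      obtain ⟨i, hbi, hoi⟩ := this
      refine ⟨i, ⟨hbi, hoi⟩, ?_⟩
      intro i' ⟨hbi', hoi'⟩
      have h1 := (hB t).1
      have hcard : ((Finset.univ.filter fun x => B x = t).image fun x => O x j).card
          = (Finset.univ.filter fun x => B x = t).card := by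
        rw [h2, h1, Nat.card_Icc]; omega
      exact Finset.injOn_of_card_image_eq hcard (by simp [hbi']) (by simp [hbi]) (hoi'.trans hoi.symm)
    have hcoll : ∀ i (j : Fin m), ((B i : ℕ) * m + O i j - 1) / m = (B i : ℕ) := by
      intro i j
      have h1 := hO1 i j
      have h2 := hOle i j
      have he : (B i : ℕ) * m + O i j - 1 = (O i j - 1) + (B i : ℕ) * m := by omega
      rw [he, Nat.add_mul_div_right _ _ (by omega : 0 < m),
        Nat.div_eq_of_lt (by omega)]
      omega
    have hBbij : Finset.card (Finset.univ.filter fun i => O i j = c) = k ∧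
        (Finset.univ.filter fun i => O i j = c).image B = Finset.univ := by
      have himg : (Finset.univ.filter fun i => O i j = c).image B = Finset.univ := by
        apply Finset.eq_univ_of_forall
        intro t
        obtain ⟨i, ⟨hbi, hoi⟩, _⟩ := key t
        exact Finset.mem_image.2 ⟨i, by simp [hoi], hbi⟩
      constructor
      · have hinj : Set.InjOn B (Finset.univ.filter fun i => O i j = c) := by
          intro i hi i' hi' hb
          simp only [Finset.coe_filter, Set.mem_setOf_eq] at hi hi'
          obtain ⟨u, _, hu⟩ := key (B i)
          rw [hu i ⟨rfl, hi.2⟩, hu i' ⟨hb.symm, hi'.2⟩]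
        rw [← Finset.card_image_of_injOn hinj, himg]
        simp
      · exact himg
    refine ⟨hBbij.1, ?_⟩
    have : ((Finset.univ.filter fun i => O i j = c).image
        (fun i => ((B i : ℕ) * m + O i j' - 1) / m)) =
        (Finset.univ.filter fun i => O i j = c).image (fun i => (B i : ℕ)) := by
      apply Finset.image_congr
      intro i _
      exact hcoll i j'
    rw [this]
    have : (Finset.univ.filter fun i => O i j = c).image (fun i => (B i : ℕ)) =
        ((Finset.univ.filter fun i => O i j = c).image B).image Fin.val := by
      rw [Finset.image_image]; rfl
    rw [this, hBbij.2]
    ext x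
    simp [Finset.mem_range, Fin.exists_iff]
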